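/- arXiv:1401.0882 — 7 statements merged into one kernel-verified Lean document; each statement's English description precedes it below -/
import Mathlib

section
/- There exists a Steinitz-Rademacher polyhedron of cardinality 6. -/
/-- A Steinitz-Rademacher polyhedron structure on a type `P` with
vertex/edge/face predicates `V`, `E`, `F` and incidence relation `I`. -/
structure IsSR {P : Type*} (V E F : P → Prop) (I : P → P → Prop) : Prop where
  exV : ∃ x, V x
  exE : ∃ x, E x
  exF : ∃ x, F x
  cover : ∀ x, V x ∨ E x ∨ F x
  symm : ∀ x y, I x y → I y x
  noVV : ∀ x y, V x → V y → ¬ I x y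
  noEE : ∀ x y, E x → E y → ¬ I x y
  noFF : ∀ x y, F x → F y → ¬ I x y
  trans : ∀ v e f, V v → E e → F f → I v e → I e f → I v f
  edgeV : ∀ e, E e → ∃ v₁ v₂, v₁ ≠ v₂ ∧ V v₁ ∧ V v₂ ∧ I e v₁ ∧ I e v₂ ∧
    ∀ v, V v → I e v → v = v₁ ∨ v = v₂
  edgeF : ∀ e, E e → ∃ f₁ f₂, f₁ ≠ f₂ ∧ F f₁ ∧ F f₂ ∧ I e f₁ ∧ I e f₂ ∧
    ∀ f, F f → I e f → f = f₁ ∨ f = f₂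
  vfE : ∀ v f, V v → F f → I v f → ∃ e₁ e₂, e₁ ≠ e₂ ∧ E e₁ ∧ E e₂ ∧
    I v e₁ ∧ I e₁ f ∧ I v e₂ ∧ I e₂ f ∧
    ∀ e, E e → I v e → I e f → e = e₁ ∨ e = e₂
  vInc : ∀ v, V v → ∃ x, x ≠ v ∧ I v x
  fInc : ∀ f, F f → ∃ x, x ≠ f ∧ I f x

theorem sr_card_six_exists :
    ∃ (P : Type) (V E F : P → Prop) (I : P → P → Prop),
      IsSR V E F I ∧ Nat.card P = 6 := by
  refine ⟨Fin 6, fun x => x.val / 2 = 0, fun x => x.val / 2 = 1, fun x => x.val / 2 = 2,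
    fun x y => x.val / 2 ≠ y.val / 2, ?_, by simp⟩
  constructor <;> decide
end

section
/- There is no Steinitz-Rademacher polyhedron of cardinality at most 5. -/
theorem no_sr_card_le_five (P : Type) (V E F : P → Prop) (I : P → P → Prop)
    (h : IsSR V E F I) (hfin : Finite P) (hcard : Nat.card P ≤ 5) : False := by
  classical
  obtain ⟨e, he⟩ := h.exE
  obtain ⟨v₁, v₂, hv12, hV1, hV2, hIev1, hIev2, -⟩ := h.edgeV e he
  obtain ⟨f₁, f₂, hf12, hF1, hF2, hIef1, hIef2, -⟩ := h.edgeF e he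
  have hv1e := h.symm _ _ hIev1
  have hv2e := h.symm _ _ hIev2
  have h11 : I v₁ f₁ := h.trans v₁ e f₁ hV1 he hF1 hv1e hIef1
  have h12 : I v₁ f₂ := h.trans v₁ e f₂ hV1 he hF2 hv1e hIef2
  have h21 : I v₂ f₁ := h.trans v₂ e f₁ hV2 he hF1 hv2e hIef1
  have h22 : I v₂ f₂ := h.trans v₂ e f₂ hV2 he hF2 hv2e hIef2
  obtain ⟨e₁, e₂, he12, hE1, hE2, hIve1, hIe1f, hIve2, hIe2f, -⟩ :=
    h.vfE v₁ f₁ hV1 hF1 h11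
  -- pairwise distinctness of v₁, v₂, f₁, f₂, e₁, e₂
  have d13 : v₁ ≠ f₁ := fun hh => h.noFF f₁ f₁ hF1 hF1 (hh ▸ h11)
  have d14 : v₁ ≠ f₂ := fun hh => h.noFF f₂ f₂ hF2 hF2 (hh ▸ h12)
  have d23 : v₂ ≠ f₁ := fun hh => h.noFF f₁ f₁ hF1 hF1 (hh ▸ h21)
  have d24 : v₂ ≠ f₂ := fun hh => h.noFF f₂ f₂ hF2 hF2 (hh ▸ h22)
  have d15 : v₁ ≠ e₁ := fun hh => h.noVV v₁ v₁ hV1 hV1 (hh ▸ hIve1)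
  have d16 : v₁ ≠ e₂ := fun hh => h.noVV v₁ v₁ hV1 hV1 (hh ▸ hIve2)
  have d25 : v₂ ≠ e₁ := fun hh => h.noVV v₁ v₂ hV1 hV2 (hh ▸ hIve1)
  have d26 : v₂ ≠ e₂ := fun hh => h.noVV v₁ v₂ hV1 hV2 (hh ▸ hIve2)
  have d35 : f₁ ≠ e₁ := fun hh => h.noFF f₁ f₁ hF1 hF1 (h.symm _ _ (hh ▸ hIe1f))
  have d36 : f₁ ≠ e₂ := fun hh => h.noFF f₁ f₁ hF1 hF1 (h.symm _ _ (hh ▸ hIe2f))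
  have d45 : f₂ ≠ e₁ := fun hh => h.noFF f₂ f₁ hF2 hF1 (hh ▸ hIe1f)
  have d46 : f₂ ≠ e₂ := fun hh => h.noFF f₂ f₁ hF2 hF1 (hh ▸ hIe2f)
  haveI := Fintype.ofFinite P
  have hle : ({v₁, v₂, f₁, f₂, e₁, e₂} : Finset P).card ≤ Nat.card P := by
    rw [Nat.card_eq_fintype_card]
    exact Finset.card_le_univ _
  have hc : ({v₁, v₂, f₁, f₂, e₁, e₂} : Finset P).card = 6 := by
    rw [Finset.card_insert_of_notMem (by simp [hv12, d13, d14, d15, d16]),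
        Finset.card_insert_of_notMem (by simp [d23, d24, d25, d26]),
        Finset.card_insert_of_notMem (by simp [hf12, d35, d36]),
        Finset.card_insert_of_notMem (by simp [d45, d46]),
        Finset.card_insert_of_notMem (by simp [he12]),
        Finset.card_singleton]
  omega
end

section
/- Any two Steinitz-Rademacher polyhedra of cardinality 6 are isomorphic (as structures preserving V, E, F, and I). -/
section Aux

variable {P : Type} {V E F : P → Prop} {I : P → P → Prop}

lemma IsSR.disjVE (h : IsSR V E F I) {x : P} (hv : V x) (he : E x) : False := by
  obtain ⟨v1, v2, hne, hv1, hv2, hi1, hi2, _⟩ := h.edgeV x he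
  exact h.noVV x v1 hv hv1 hi1

lemma IsSR.disjEF (h : IsSR V E F I) {x : P} (he : E x) (hf : F x) : False := by
  obtain ⟨f1, f2, hne, hf1, hf2, hi1, hi2, _⟩ := h.edgeF x he
  exact h.noFF x f1 hf hf1 hi1

lemma IsSR.disjVF (h : IsSR V E F I) {x : P} (hv : V x) (hf : F x) : False := by
  obtain ⟨y, hyx, hxy⟩ := h.vInc x hv
  rcases h.cover y with hy | hy | hy
  · exact h.noVV x y hv hy hxy
  · exact h.noVV x x hv hv (h.trans x y x hv hy hf hxy (h.symm x y hxy))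
  · exact h.noFF x y hf hy hxy

lemma IsSR.six (h : IsSR V E F I) (hc : Nat.card P = 6) :
    ∃ v1 v2 e1 e2 f1 f2 : P,
      V v1 ∧ V v2 ∧ E e1 ∧ E e2 ∧ F f1 ∧ F f2 ∧
      v1 ≠ v2 ∧ e1 ≠ e2 ∧ f1 ≠ f2 ∧
      (∀ x, V x ↔ (x = v1 ∨ x = v2)) ∧
      (∀ x, E x ↔ (x = e1 ∨ x = e2)) ∧
      (∀ x, F x ↔ (x = f1 ∨ x = f2)) ∧
      (∀ x y, I x y ↔ ((V x ∧ E y) ∨ (V x ∧ F y) ∨ (E x ∧ V y) ∨ (E x ∧ F y) ∨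
        (F x ∧ V y) ∨ (F x ∧ E y))) := by
  classical
  obtain ⟨e1, he1⟩ := h.exE
  obtain ⟨v1, v2, hv12, hv1, hv2, hie1v1, hie1v2, hvonly⟩ := h.edgeV e1 he1
  obtain ⟨f1, f2, hf12, hf1, hf2, hie1f1, hie1f2, hfonly⟩ := h.edgeF e1 he1
  have hIvf : ∀ v f, V v → F f → I v e1 → I e1 f → I v f := fun v f hv hf h1 h2 =>
    h.trans v e1 f hv he1 hf h1 h2
  have hiv1f1 : I v1 f1 := hIvf v1 f1 hv1 hf1 (h.symm _ _ hie1v1) hie1f1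
  obtain ⟨a, b, hab, hEa, hEb, _, _, _, _, _⟩ := h.vfE v1 f1 hv1 hf1 hiv1f1
  -- pick e2 ≠ e1 among a, b
  obtain ⟨e2, hE2, he21⟩ : ∃ e2, E e2 ∧ e2 ≠ e1 := by
    by_cases hae : a = e1
    · exact ⟨b, hEb, fun hb => hab (by rw [hae, hb])⟩
    · exact ⟨a, hEa, hae⟩
  -- pairwise distinctness
  have hVE : ∀ {p q : P}, V p → E q → p ≠ q := fun hp hq hpq => h.disjVE hp (hpq ▸ hq)
  have hVF : ∀ {p q : P}, V p → F q → p ≠ q := fun hp hq hpq => h.disjVF hp (hpq ▸ hq)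
  have hEF : ∀ {p q : P}, E p → F q → p ≠ q := fun hp hq hpq => h.disjEF hp (hpq ▸ hq)
  -- enumeration
  haveI : Finite P := Nat.finite_of_card_ne_zero (by omega)
  haveI : Fintype P := Fintype.ofFinite P
  set l : List P := [v1, v2, e1, e2, f1, f2] with hl
  have hnd : l.Nodup := by
    have h12 : e1 ≠ e2 := fun hh => he21 hh.symm
    simp [hl, hv12, hf12, h12, hv12.symm, hf12.symm, he21,
      hVE hv1 he1, hVE hv1 hE2, hVF hv1 hf1, hVF hv1 hf2,
      hVE hv2 he1, hVE hv2 hE2, hVF hv2 hf1, hVF hv2 hf2,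
      hEF he1 hf1, hEF he1 hf2, hEF hE2 hf1, hEF hE2 hf2,
      (hVE hv1 he1).symm, (hVE hv1 hE2).symm, (hVF hv1 hf1).symm, (hVF hv1 hf2).symm,
      (hVE hv2 he1).symm, (hVE hv2 hE2).symm, (hVF hv2 hf1).symm, (hVF hv2 hf2).symm,
      (hEF he1 hf1).symm, (hEF he1 hf2).symm, (hEF hE2 hf1).symm, (hEF hE2 hf2).symm]
  have hmem : ∀ x : P, x ∈ l := by
    have hcard : l.toFinset.card = 6 := by
      rw [List.toFinset_card_of_nodup hnd]; rfl
    have huniv : l.toFinset = Finset.univ := by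
      apply Finset.eq_univ_of_card
      rw [hcard, ← hc, Nat.card_eq_fintype_card]
    intro x
    have : x ∈ l.toFinset := by rw [huniv]; exact Finset.mem_univ x
    simpa using this
  have henum : ∀ x : P, x = v1 ∨ x = v2 ∨ x = e1 ∨ x = e2 ∨ x = f1 ∨ x = f2 := by
    intro x
    have := hmem x
    simpa [hl] using this
  -- sort characterizations
  have hVc : ∀ x, V x ↔ (x = v1 ∨ x = v2) := by
    intro x
    constructor
    · intro hx
      rcases henum x with rfl | rfl | rfl | rfl | rfl | rfl
      · exact Or.inl rfl
      · exact Or.inr rfl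
      · exact absurd he1 (fun hh => h.disjVE hx hh)
      · exact absurd hE2 (fun hh => h.disjVE hx hh)
      · exact absurd hf1 (fun hh => h.disjVF hx hh)
      · exact absurd hf2 (fun hh => h.disjVF hx hh)
    · rintro (rfl | rfl); exacts [hv1, hv2]
  have hEc : ∀ x, E x ↔ (x = e1 ∨ x = e2) := by
    intro x
    constructor
    · intro hx
      rcases henum x with rfl | rfl | rfl | rfl | rfl | rfl
      · exact absurd hx (fun hh => h.disjVE hv1 hh)
      · exact absurd hx (fun hh => h.disjVE hv2 hh)
      · exact Or.inl rfl
      · exact Or.inr rfl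
      · exact absurd hf1 (fun hh => h.disjEF hx hh)
      · exact absurd hf2 (fun hh => h.disjEF hx hh)
    · rintro (rfl | rfl); exacts [he1, hE2]
  have hFc : ∀ x, F x ↔ (x = f1 ∨ x = f2) := by
    intro x
    constructor
    · intro hx
      rcases henum x with rfl | rfl | rfl | rfl | rfl | rfl
      · exact absurd hx (fun hh => h.disjVF hv1 hh)
      · exact absurd hx (fun hh => h.disjVF hv2 hh)
      · exact absurd hx (fun hh => h.disjEF he1 hh)
      · exact absurd hx (fun hh => h.disjEF hE2 hh)
      · exact Or.inl rfl
      · exact Or.inr rfl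
    · rintro (rfl | rfl); exacts [hf1, hf2]
  -- all edge-vertex and edge-face incidences
  have hEV : ∀ e v, E e → V v → I e v := by
    intro e v he hv
    obtain ⟨w1, w2, hw12, hw1, hw2, hi1, hi2, _⟩ := h.edgeV e he
    rcases (hVc v).1 hv with rfl | rfl <;>
    rcases (hVc w1).1 hw1 with rfl | rfl <;>
    rcases (hVc w2).1 hw2 with rfl | rfl <;>
    first
    | exact hi1
    | exact hi2
    | exact absurd rfl hw12
  have hEFi : ∀ e f, E e → F f → I e f := by
    intro e f he hf
    obtain ⟨w1, w2, hw12, hw1, hw2, hi1, hi2, _⟩ := h.edgeF e he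
    rcases (hFc f).1 hf with rfl | rfl <;>
    rcases (hFc w1).1 hw1 with rfl | rfl <;>
    rcases (hFc w2).1 hw2 with rfl | rfl <;>
    first
    | exact hi1
    | exact hi2
    | exact absurd rfl hw12
  have hVFi : ∀ v f, V v → F f → I v f := fun v f hv hf =>
    h.trans v e1 f hv he1 hf (h.symm _ _ (hEV e1 v he1 hv)) (hEFi e1 f he1 hf)
  refine ⟨v1, v2, e1, e2, f1, f2, hv1, hv2, he1, hE2, hf1, hf2, hv12,
    fun hh => he21 hh.symm, hf12, hVc, hEc, hFc, ?_⟩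
  intro x y
  constructor
  · intro hxy
    rcases h.cover x with hx | hx | hx <;> rcases h.cover y with hy | hy | hy
    · exact absurd hxy (h.noVV x y hx hy)
    · exact Or.inl ⟨hx, hy⟩
    · exact Or.inr (Or.inl ⟨hx, hy⟩)
    · exact Or.inr (Or.inr (Or.inl ⟨hx, hy⟩))
    · exact absurd hxy (h.noEE x y hx hy)
    · exact Or.inr (Or.inr (Or.inr (Or.inl ⟨hx, hy⟩)))
    · exact Or.inr (Or.inr (Or.inr (Or.inr (Or.inl ⟨hx, hy⟩))))
    · exact Or.inr (Or.inr (Or.inr (Or.inr (Or.inr ⟨hx, hy⟩))))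
    · exact absurd hxy (h.noFF x y hx hy)
  · rintro (⟨hx, hy⟩ | ⟨hx, hy⟩ | ⟨hx, hy⟩ | ⟨hx, hy⟩ | ⟨hx, hy⟩ | ⟨hx, hy⟩)
    · exact h.symm _ _ (hEV y x hy hx)
    · exact hVFi x y hx hy
    · exact hEV x y hx hy
    · exact hEFi x y hx hy
    · exact h.symm _ _ (hVFi y x hy hx)
    · exact h.symm _ _ (hEFi y x hy hx)

end Aux

theorem sr_card_six_categorical (P Q : Type)
    (V E F : P → Prop) (I : P → P → Prop)
    (V' E' F' : Q → Prop) (I' : Q → Q → Prop)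
    (hP : IsSR V E F I) (hQ : IsSR V' E' F' I')
    (hcP : Nat.card P = 6) (hcQ : Nat.card Q = 6) :
    ∃ g : P ≃ Q, (∀ x, V' (g x) ↔ V x) ∧ (∀ x, E' (g x) ↔ E x) ∧
      (∀ x, F' (g x) ↔ F x) ∧ (∀ x y, I' (g x) (g y) ↔ I x y) := by
  classical
  obtain ⟨v1, v2, e1, e2, f1, f2, hv1, hv2, he1, he2, hf1, hf2, hv12, he12, hf12,
    hVc, hEc, hFc, hIc⟩ := hP.six hcP
  obtain ⟨w1, w2, d1, d2, g1, g2, hw1, hw2, hd1, hd2, hg1, hg2, hw12, hd12, hg12,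
    hVc', hEc', hFc', hIc'⟩ := hQ.six hcQ
  -- enumeration of P and Q
  have henumP : ∀ x : P, x = v1 ∨ x = v2 ∨ x = e1 ∨ x = e2 ∨ x = f1 ∨ x = f2 := by
    intro x
    rcases hP.cover x with hx | hx | hx
    · rcases (hVc x).1 hx with rfl | rfl
      · exact Or.inl rfl
      · exact Or.inr (Or.inl rfl)
    · rcases (hEc x).1 hx with rfl | rfl
      · exact Or.inr (Or.inr (Or.inl rfl))
      · exact Or.inr (Or.inr (Or.inr (Or.inl rfl)))
    · rcases (hFc x).1 hx with rfl | rfl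
      · exact Or.inr (Or.inr (Or.inr (Or.inr (Or.inl rfl))))
      · exact Or.inr (Or.inr (Or.inr (Or.inr (Or.inr rfl))))
  have henumQ : ∀ x : Q, x = w1 ∨ x = w2 ∨ x = d1 ∨ x = d2 ∨ x = g1 ∨ x = g2 := by
    intro x
    rcases hQ.cover x with hx | hx | hx
    · rcases (hVc' x).1 hx with rfl | rfl
      · exact Or.inl rfl
      · exact Or.inr (Or.inl rfl)
    · rcases (hEc' x).1 hx with rfl | rfl
      · exact Or.inr (Or.inr (Or.inl rfl))
      · exact Or.inr (Or.inr (Or.inr (Or.inl rfl)))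
    · rcases (hFc' x).1 hx with rfl | rfl
      · exact Or.inr (Or.inr (Or.inr (Or.inr (Or.inl rfl))))
      · exact Or.inr (Or.inr (Or.inr (Or.inr (Or.inr rfl))))
  -- cross-sort distinctness in P
  have hVEp : ∀ {p q : P}, V p → E q → p ≠ q := fun hp hq hpq => hP.disjVE hp (hpq ▸ hq)
  have hVFp : ∀ {p q : P}, V p → F q → p ≠ q := fun hp hq hpq => hP.disjVF hp (hpq ▸ hq)
  have hEFp : ∀ {p q : P}, E p → F q → p ≠ q := fun hp hq hpq => hP.disjEF hp (hpq ▸ hq)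
  have hVEq : ∀ {p q : Q}, V' p → E' q → p ≠ q := fun hp hq hpq => hQ.disjVE hp (hpq ▸ hq)
  have hVFq : ∀ {p q : Q}, V' p → F' q → p ≠ q := fun hp hq hpq => hQ.disjVF hp (hpq ▸ hq)
  have hEFq : ∀ {p q : Q}, E' p → F' q → p ≠ q := fun hp hq hpq => hQ.disjEF hp (hpq ▸ hq)
  -- the map and its inverse
  set gfun : P → Q := fun x =>
    if x = v1 then w1 else if x = v2 then w2 else if x = e1 then d1
    else if x = e2 then d2 else if x = f1 then g1 else g2 with hgfun
  set ginv : Q → P := fun x =>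
    if x = w1 then v1 else if x = w2 then v2 else if x = d1 then e1
    else if x = d2 then e2 else if x = g1 then f1 else f2 with hginv
  have hg_v1 : gfun v1 = w1 := by simp [hgfun]
  have hg_v2 : gfun v2 = w2 := by simp [hgfun, hv12.symm]
  have hg_e1 : gfun e1 = d1 := by
    simp [hgfun, (hVEp hv1 he1).symm, (hVEp hv2 he1).symm]
  have hg_e2 : gfun e2 = d2 := by
    simp [hgfun, (hVEp hv1 he2).symm, (hVEp hv2 he2).symm, he12.symm]
  have hg_f1 : gfun f1 = g1 := by
    simp [hgfun, (hVFp hv1 hf1).symm, (hVFp hv2 hf1).symm, (hEFp he1 hf1).symm,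
      (hEFp he2 hf1).symm]
  have hg_f2 : gfun f2 = g2 := by
    simp [hgfun, (hVFp hv1 hf2).symm, (hVFp hv2 hf2).symm, (hEFp he1 hf2).symm,
      (hEFp he2 hf2).symm, hf12.symm]
  have hi_w1 : ginv w1 = v1 := by simp [hginv]
  have hi_w2 : ginv w2 = v2 := by simp [hginv, hw12.symm]
  have hi_d1 : ginv d1 = e1 := by
    simp [hginv, (hVEq hw1 hd1).symm, (hVEq hw2 hd1).symm]
  have hi_d2 : ginv d2 = e2 := by
    simp [hginv, (hVEq hw1 hd2).symm, (hVEq hw2 hd2).symm, hd12.symm]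
  have hi_g1 : ginv g1 = f1 := by
    simp [hginv, (hVFq hw1 hg1).symm, (hVFq hw2 hg1).symm, (hEFq hd1 hg1).symm,
      (hEFq hd2 hg1).symm]
  have hi_g2 : ginv g2 = f2 := by
    simp [hginv, (hVFq hw1 hg2).symm, (hVFq hw2 hg2).symm, (hEFq hd1 hg2).symm,
      (hEFq hd2 hg2).symm, hg12.symm]
  have hleft : Function.LeftInverse ginv gfun := by
    intro x
    rcases henumP x with rfl | rfl | rfl | rfl | rfl | rfl <;>
      simp only [hg_v1, hg_v2, hg_e1, hg_e2, hg_f1, hg_f2,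
        hi_w1, hi_w2, hi_d1, hi_d2, hi_g1, hi_g2]
  have hright : Function.RightInverse ginv gfun := by
    intro x
    rcases henumQ x with rfl | rfl | rfl | rfl | rfl | rfl <;>
      simp only [hg_v1, hg_v2, hg_e1, hg_e2, hg_f1, hg_f2,
        hi_w1, hi_w2, hi_d1, hi_d2, hi_g1, hi_g2]
  have hVg : ∀ x, V' (gfun x) ↔ V x := by
    intro x
    rcases henumP x with rfl | rfl | rfl | rfl | rfl | rfl
    · rw [hg_v1]; exact iff_of_true hw1 hv1
    · rw [hg_v2]; exact iff_of_true hw2 hv2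
    · rw [hg_e1]; exact iff_of_false (fun hh => hQ.disjVE hh hd1) (fun hh => hP.disjVE hh he1)
    · rw [hg_e2]; exact iff_of_false (fun hh => hQ.disjVE hh hd2) (fun hh => hP.disjVE hh he2)
    · rw [hg_f1]; exact iff_of_false (fun hh => hQ.disjVF hh hg1) (fun hh => hP.disjVF hh hf1)
    · rw [hg_f2]; exact iff_of_false (fun hh => hQ.disjVF hh hg2) (fun hh => hP.disjVF hh hf2)
  have hEg : ∀ x, E' (gfun x) ↔ E x := by
    intro x
    rcases henumP x with rfl | rfl | rfl | rfl | rfl | rfl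
    · rw [hg_v1]; exact iff_of_false (fun hh => hQ.disjVE hw1 hh) (fun hh => hP.disjVE hv1 hh)
    · rw [hg_v2]; exact iff_of_false (fun hh => hQ.disjVE hw2 hh) (fun hh => hP.disjVE hv2 hh)
    · rw [hg_e1]; exact iff_of_true hd1 he1
    · rw [hg_e2]; exact iff_of_true hd2 he2
    · rw [hg_f1]; exact iff_of_false (fun hh => hQ.disjEF hh hg1) (fun hh => hP.disjEF hh hf1)
    · rw [hg_f2]; exact iff_of_false (fun hh => hQ.disjEF hh hg2) (fun hh => hP.disjEF hh hf2)
  have hFg : ∀ x, F' (gfun x) ↔ F x := by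
    intro x
    rcases henumP x with rfl | rfl | rfl | rfl | rfl | rfl
    · rw [hg_v1]; exact iff_of_false (fun hh => hQ.disjVF hw1 hh) (fun hh => hP.disjVF hv1 hh)
    · rw [hg_v2]; exact iff_of_false (fun hh => hQ.disjVF hw2 hh) (fun hh => hP.disjVF hv2 hh)
    · rw [hg_e1]; exact iff_of_false (fun hh => hQ.disjEF hd1 hh) (fun hh => hP.disjEF he1 hh)
    · rw [hg_e2]; exact iff_of_false (fun hh => hQ.disjEF hd2 hh) (fun hh => hP.disjEF he2 hh)
    · rw [hg_f1]; exact iff_of_true hg1 hf1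
    · rw [hg_f2]; exact iff_of_true hg2 hf2
  refine ⟨⟨gfun, ginv, hleft, hright⟩, hVg, hEg, hFg, ?_⟩
  intro x y
  simp only [Equiv.coe_fn_mk]
  rw [hIc' (gfun x) (gfun y), hIc x y, hVg, hVg, hEg, hEg, hFg, hFg]
end

section
/- Every Steinitz-Rademacher polyhedron of cardinality 6 has exactly 2 vertices, exactly 2 edges, and exactly 2 faces. -/
theorem sr_card_six_counts (P : Type) (V E F : P → Prop) (I : P → P → Prop)
    (h : IsSR V E F I) (hcard : Nat.card P = 6) :
    Nat.card {x // V x} = 2 ∧ Nat.card {x // E x} = 2 ∧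
      Nat.card {x // F x} = 2 := by

  classical
  haveI hfin : Finite P := by
    have : 0 < Nat.card P := by omega
    exact (Nat.card_pos_iff.mp this).2
  -- disjointness of the three sorts
  have hVE : ∀ x, V x → E x → False := by
    intro x hV hE
    obtain ⟨v₁, v₂, _, hv₁, _, hI₁, _, _⟩ := h.edgeV x hE
    exact h.noVV x v₁ hV hv₁ hI₁
  have hEF : ∀ x, E x → F x → False := by
    intro x hE hF
    obtain ⟨f₁, f₂, _, hf₁, _, hI₁, _, _⟩ := h.edgeF x hE
    exact h.noFF x f₁ hF hf₁ hI₁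
  have hVF : ∀ x, V x → F x → False := by
    intro x hV hF
    obtain ⟨y, hyx, hIxy⟩ := h.vInc x hV
    rcases h.cover y with hy | hy | hy
    · exact h.noVV x y hV hy hIxy
    · obtain ⟨f₁, f₂, _, hf₁, _, hIf₁, _, _⟩ := h.edgeF y hy
      exact h.noFF x f₁ hF hf₁ (h.trans x y f₁ hV hy hf₁ hIxy hIf₁)
    · exact h.noFF x y hF hy hIxy
  -- lower bounds
  obtain ⟨e, hE⟩ := h.exE
  obtain ⟨v₁, v₂, hvne, hv₁, hv₂, hIv₁, hIv₂, _⟩ := h.edgeV e hE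
  obtain ⟨f₁, f₂, hfne, hf₁, hf₂, hIf₁, hIf₂, _⟩ := h.edgeF e hE
  have hIvf : I v₁ f₁ := h.trans v₁ e f₁ hv₁ hE hf₁ (h.symm e v₁ hIv₁) hIf₁
  obtain ⟨e₁, e₂, hene, he₁, he₂, _, _, _, _, _⟩ := h.vfE v₁ f₁ hv₁ hf₁ hIvf
  have hVnt : Nontrivial {x // V x} :=
    ⟨⟨v₁, hv₁⟩, ⟨v₂, hv₂⟩, by simpa using hvne⟩
  have hEnt : Nontrivial {x // E x} :=
    ⟨⟨e₁, he₁⟩, ⟨e₂, he₂⟩, by simpa using hene⟩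
  have hFnt : Nontrivial {x // F x} :=
    ⟨⟨f₁, hf₁⟩, ⟨f₂, hf₂⟩, by simpa using hfne⟩
  have hV2 : 2 ≤ Nat.card {x // V x} := Finite.one_lt_card_iff_nontrivial.mpr hVnt
  have hE2 : 2 ≤ Nat.card {x // E x} := Finite.one_lt_card_iff_nontrivial.mpr hEnt
  have hF2 : 2 ≤ Nat.card {x // F x} := Finite.one_lt_card_iff_nontrivial.mpr hFnt
  -- sum of cardinalities
  have hUnion : ({x | V x} ∪ ({x | E x} ∪ {x | F x}) : Set P) = Set.univ := by
    ext x
    simpa using h.cover x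
  have hdisj₂ : Disjoint ({x | E x} : Set P) {x | F x} := by
    rw [Set.disjoint_left]
    intro a ha hb
    exact hEF a ha hb
  have hdisj₁ : Disjoint ({x | V x} : Set P) ({x | E x} ∪ {x | F x}) := by
    rw [Set.disjoint_left]
    intro a ha hb
    rcases hb with hb | hb
    · exact hVE a ha hb
    · exact hVF a ha hb
  have hsum : Set.ncard ({x | V x} : Set P) + (Set.ncard ({x | E x} : Set P)
      + Set.ncard ({x | F x} : Set P)) = 6 := by
    rw [← Set.ncard_union_eq hdisj₂ (Set.toFinite _) (Set.toFinite _),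
      ← Set.ncard_union_eq hdisj₁ (Set.toFinite _) (Set.toFinite _), hUnion,
      Set.ncard_univ, hcard]
  have e1 : Nat.card {x // V x} = Set.ncard ({x | V x} : Set P) :=
    (Nat.card_coe_set_eq _)
  have e2 : Nat.card {x // E x} = Set.ncard ({x | E x} : Set P) :=
    (Nat.card_coe_set_eq _)
  have e3 : Nat.card {x // F x} = Set.ncard ({x | F x} : Set P) :=
    (Nat.card_coe_set_eq _)
  omega
end

section
/- There exists a Steinitz-Rademacher polyhedron of cardinality 8 with exactly 2 vertices, 3 edges, and 3 faces. -/
/-- Vertices: 0,1. Edges: 2,3,4. Faces: 5,6,7. -/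
def srV (x : Fin 8) : Prop := x.val < 2
def srE (x : Fin 8) : Prop := 2 ≤ x.val ∧ x.val < 5
def srF (x : Fin 8) : Prop := 5 ≤ x.val

def srIb (x y : Fin 8) : Bool :=
  -- vertex-edge: all, vertex-face: all
  (x.val < 2 && 2 ≤ y.val) || (y.val < 2 && 2 ≤ x.val) ||
  -- edge-face: face 5={2,3}, 6={3,4}, 7={2,4}
  (decide ((x.val, y.val) ∈ [(2,5),(3,5),(3,6),(4,6),(2,7),(4,7),
    (5,2),(5,3),(6,3),(6,4),(7,2),(7,4)]))

def srI (x y : Fin 8) : Prop := srIb x y = true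

theorem sr_card_eight_exists :
    ∃ (P : Type) (V E F : P → Prop) (I : P → P → Prop),
      IsSR V E F I ∧ Nat.card P = 8 ∧
      Nat.card {x // V x} = 2 ∧ Nat.card {x // E x} = 3 ∧
      Nat.card {x // F x} = 3 := by
  refine ⟨Fin 8, srV, srE, srF, srI, ⟨?_, ?_, ?_, ?_, ?_, ?_, ?_, ?_, ?_, ?_, ?_, ?_, ?_, ?_⟩, ?_, ?_, ?_, ?_⟩ <;>
    simp only [Nat.card_eq_fintype_card, srV, srE, srF, srI] <;> decide
end

section
/- For every n ≥ 3 there exists a Steinitz-Rademacher polyhedron of cardinality 4n + 2; consequently there is no largest finite Steinitz-Rademacher polyhedron. -/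
abbrev Pyr (n : ℕ) : Type := (ZMod n ⊕ ZMod n) ⊕ (ZMod n ⊕ ZMod n) ⊕ Bool

namespace SRPyr

variable {n : ℕ}

/-- one-directional incidence -/
def R : Pyr n → Pyr n → Prop
  | .inl (.inl i), .inl (.inr j) => j = i ∨ j = i - 1           -- vb–eb
  | .inl (.inl i), .inr (.inl (.inl j)) => j = i                -- vb–el
  | .inl (.inl i), .inr (.inl (.inr j)) => j = i ∨ j = i - 1    -- vb–ft
  | .inl (.inl _), .inr (.inr false) => True                    -- vb–fb
  | .inr (.inr true), .inr (.inl (.inl _)) => True              -- apex–el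
  | .inr (.inr true), .inr (.inl (.inr _)) => True              -- apex–ft
  | .inl (.inr i), .inr (.inl (.inr j)) => j = i                -- eb–ft
  | .inl (.inr _), .inr (.inr false) => True                    -- eb–fb
  | .inr (.inl (.inl i)), .inr (.inl (.inr j)) => j = i ∨ j = i - 1 -- el–ft
  | _, _ => False

def PV : Pyr n → Prop
  | .inl (.inl _) => True
  | .inr (.inr true) => True
  | _ => False

def PE : Pyr n → Prop
  | .inl (.inr _) => True
  | .inr (.inl (.inl _)) => True
  | _ => False

def PF : Pyr n → Prop
  | .inr (.inl (.inr _)) => True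
  | .inr (.inr false) => True
  | _ => False

def I (x y : Pyr n) : Prop := R x y ∨ R y x

set_option maxHeartbeats 2000000 in
theorem pyr_isSR (h : 3 ≤ n) : IsSR (PV (n := n)) PE PF I := by
  haveI : NeZero n := ⟨by omega⟩
  haveI : Fact (1 < n) := ⟨by omega⟩
  have h1 : (1 : ZMod n) ≠ 0 := one_ne_zero
  have hsub : ∀ i : ZMod n, i ≠ i - 1 := fun i hi => h1 (sub_eq_self.mp hi.symm)
  have hadd : ∀ i : ZMod n, i ≠ i + 1 := fun i hi => h1 (left_eq_add.mp hi)
  constructor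
  · exact ⟨.inl (.inl 0), trivial⟩
  · exact ⟨.inl (.inr 0), trivial⟩
  · exact ⟨.inr (.inr false), trivial⟩
  · rintro ((i|i)|(i|i)|_|_) <;> simp [PV, PE, PF]
  · exact fun x y hxy => hxy.symm
  · rintro ((i|i)|(i|i)|_|_) ((j|j)|(j|j)|_|_) hx hy <;>
      simp only [PV] at hx hy <;> simp [I, R]
  · rintro ((i|i)|(i|i)|_|_) ((j|j)|(j|j)|_|_) hx hy <;>
      simp only [PE] at hx hy <;> simp [I, R]
  · rintro ((i|i)|(i|i)|_|_) ((j|j)|(j|j)|_|_) hx hy <;>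
      simp only [PF] at hx hy <;> simp [I, R]
  · rintro ((i|i)|(i|i)|_|_) ((j|j)|(j|j)|_|_) ((k|k)|(k|k)|_|_) hV hE hF hI1 hI2 <;>
      simp only [PV, PE, PF] at hV hE hF <;>
      simp only [I, R, or_false, false_or] at hI1 hI2 ⊢ <;> simp_all
  · rintro ((i|i)|(i|i)|_|_) hE <;> simp only [PE] at hE
    · -- base edge i : vertices vb i, vb (i+1)
      refine ⟨.inl (.inl i), .inl (.inl (i + 1)), by simp [hadd i], trivial, trivial,
        Or.inr (Or.inl rfl), Or.inr (Or.inr (by rw [add_sub_cancel_right])), ?_⟩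
      rintro ((j|j)|(j|j)|_|_) hV hI <;> simp only [PV] at hV <;>
        simp only [I, R, or_false, false_or] at hI
      rcases hI with rfl | hI
      · exact Or.inl rfl
      · right; rw [hI]; ring_nf
    · -- lateral edge i : vertices vb i, apex
      refine ⟨.inl (.inl i), .inr (.inr true), by simp, trivial, trivial,
        Or.inr rfl, Or.inr trivial, ?_⟩
      rintro ((j|j)|(j|j)|_|_) hV hI <;> simp only [PV] at hV <;>
        simp only [I, R, or_false, false_or] at hI <;> simp_all
  · rintro ((i|i)|(i|i)|_|_) hE <;> simp only [PE] at hE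
    · -- base edge i : faces ft i, fb
      refine ⟨.inr (.inl (.inr i)), .inr (.inr false), by simp, trivial, trivial,
        Or.inl rfl, Or.inl trivial, ?_⟩
      rintro ((j|j)|(j|j)|_|_) hF hI <;> simp only [PF] at hF <;>
        simp only [I, R, or_false, false_or] at hI <;> simp_all
    · -- lateral edge i : faces ft i, ft (i-1)
      refine ⟨.inr (.inl (.inr i)), .inr (.inl (.inr (i - 1))), by simp [hsub i], trivial,
        trivial, Or.inl (Or.inl rfl), Or.inl (Or.inr rfl), ?_⟩
      rintro ((j|j)|(j|j)|_|_) hF hI <;> simp only [PF] at hF <;>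
        simp only [I, R, or_false, false_or] at hI <;> simp_all
  · rintro ((i|i)|(i|i)|_|_) ((k|k)|(k|k)|_|_) hV hF hI <;>
      simp only [PV] at hV <;> simp only [PF] at hF <;>
      simp only [I, R, or_false, false_or] at hI
    · -- vb i with ft k, k = i or k = i - 1
      rcases hI with rfl | rfl
      · -- face ft i : edges eb i, el i
        refine ⟨.inl (.inr k), .inr (.inl (.inl k)), by simp, trivial, trivial,
          Or.inl (Or.inl rfl), Or.inl rfl, Or.inl rfl, Or.inl (Or.inl rfl), ?_⟩
        rintro ((j|j)|(j|j)|_|_) hE ha hb <;> simp only [PE] at hE <;>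
          simp only [I, R, or_false, false_or] at ha hb <;> simp_all
      · -- face ft (i-1) : edges eb (i-1), el i
        refine ⟨.inl (.inr (i - 1)), .inr (.inl (.inl i)), by simp, trivial, trivial,
          Or.inl (Or.inr rfl), Or.inl rfl, Or.inl rfl, Or.inl (Or.inr rfl), ?_⟩
        rintro ((j|j)|(j|j)|_|_) hE ha hb <;> simp only [PE] at hE <;>
          simp only [I, R, or_false, false_or] at ha hb <;> simp_all
    · -- vb i with fb : edges eb i, eb (i-1)
      refine ⟨.inl (.inr i), .inl (.inr (i - 1)), by simp [hsub i], trivial, trivial,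
        Or.inl (Or.inl rfl), Or.inl trivial, Or.inl (Or.inr rfl), Or.inl trivial, ?_⟩
      rintro ((j|j)|(j|j)|_|_) hE ha hb <;> simp only [PE] at hE <;>
        simp only [I, R, or_false, false_or] at ha hb <;> simp_all
    · -- apex with ft k : edges el k, el (k+1)
      refine ⟨.inr (.inl (.inl k)), .inr (.inl (.inl (k + 1))), by simp [hadd k], trivial,
        trivial, Or.inl trivial, Or.inl (Or.inl rfl),
        Or.inl trivial, Or.inl (Or.inr (by rw [add_sub_cancel_right])), ?_⟩
      rintro ((j|j)|(j|j)|_|_) hE ha hb <;> simp only [PE] at hE <;>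
        simp only [I, R, or_false, false_or] at ha hb
      rcases hb with rfl | hb
      · simp
      · right; simp [hb]
  · rintro ((i|i)|(i|i)|_|_) hV <;> simp only [PV] at hV
    · exact ⟨.inl (.inr i), by simp, Or.inl (Or.inl rfl)⟩
    · exact ⟨.inr (.inl (.inl 0)), by simp, Or.inl trivial⟩
  · rintro ((i|i)|(i|i)|_|_) hF <;> simp only [PF] at hF
    · exact ⟨.inl (.inr i), by simp, Or.inr rfl⟩
    · exact ⟨.inl (.inr 0), by simp, Or.inr trivial⟩

theorem pyr_card (h : 3 ≤ n) : Nat.card (Pyr n) = 4 * n + 2 := by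
  haveI : NeZero n := ⟨by omega⟩
  simp [Nat.card_eq_fintype_card, ZMod.card]
  omega

end SRPyr

theorem sr_pyramids_no_largest :
    (∀ n : ℕ, 3 ≤ n → ∃ (P : Type) (V E F : P → Prop) (I : P → P → Prop),
      IsSR V E F I ∧ Nat.card P = 4 * n + 2) ∧
    ∀ m : ℕ, ∃ (P : Type) (V E F : P → Prop) (I : P → P → Prop),
      IsSR V E F I ∧ Finite P ∧ m < Nat.card P := by
  constructor
  · intro n hn
    exact ⟨Pyr n, _, _, _, _, SRPyr.pyr_isSR hn, SRPyr.pyr_card hn⟩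
  · intro m
    haveI : NeZero (m + 3) := ⟨by omega⟩
    refine ⟨Pyr (m + 3), _, _, _, _, SRPyr.pyr_isSR (by omega), inferInstance, ?_⟩
    rw [SRPyr.pyr_card (by omega)]
    omega
end

section
/- There is no extensional Steinitz-Rademacher polyhedron with exactly 2 vertices, 2 edges, and 2 faces. -/
lemma card_two_pred {P : Type} {Q : P → Prop} (hQ : Nat.card {x // Q x} = 2) :
    ∃ a b : P, a ≠ b ∧ Q a ∧ Q b ∧ ∀ c, Q c → c = a ∨ c = b := by
  rw [Nat.card_eq_two_iff] at hQ
  obtain ⟨⟨a, ha⟩, ⟨b, hb⟩, hab, huniv⟩ := hQ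
  refine ⟨a, b, fun he => hab (Subtype.ext he), ha, hb, fun c hc => ?_⟩
  have : (⟨c, hc⟩ : {x // Q x}) ∈ ({⟨a, ha⟩, ⟨b, hb⟩} : Set {x // Q x}) := by
    rw [huniv]; trivial
  rcases this with h1 | h1
  · exact Or.inl (congrArg Subtype.val h1)
  · exact Or.inr (congrArg Subtype.val h1)

theorem no_extensional_sr_222 (P : Type) (V E F : P → Prop) (I : P → P → Prop)
    (h : IsSR V E F I)
    (hext : ∀ p q : P, (∀ x, I p x ↔ I q x) → p = q)
    (hV : Nat.card {x // V x} = 2) (hE : Nat.card {x // E x} = 2)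
    (hF : Nat.card {x // F x} = 2) : False := by
  obtain ⟨a, b, hab, haV, hbV, hVall⟩ := card_two_pred hV
  obtain ⟨e₁, e₂, he12, he₁, he₂, hEall⟩ := card_two_pred hE
  obtain ⟨f, g, hfg, hfF, hgF, hFall⟩ := card_two_pred hF
  -- every edge is incident with every vertex
  have edgeAllV : ∀ e v, E e → V v → I e v := by
    intro e v he hv
    obtain ⟨v₁, v₂, hne, hv₁, hv₂, hi₁, hi₂, _⟩ := h.edgeV e he
    rcases hVall v hv with rfl | rfl
    · rcases hVall v₁ hv₁ with rfl | rfl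
      · exact hi₁
      · rcases hVall v₂ hv₂ with rfl | rfl
        · exact hi₂
        · exact absurd rfl hne
    · rcases hVall v₂ hv₂ with rfl | rfl
      · rcases hVall v₁ hv₁ with rfl | rfl
        · exact absurd rfl hne
        · exact hi₁
      · exact hi₂
  have edgeAllF : ∀ e x, E e → F x → I e x := by
    intro e x he hx
    obtain ⟨f₁, f₂, hne, hf₁, hf₂, hi₁, hi₂, _⟩ := h.edgeF e he
    rcases hFall x hx with rfl | rfl
    · rcases hFall f₁ hf₁ with rfl | rfl
      · exact hi₁
      · rcases hFall f₂ hf₂ with rfl | rfl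
        · exact hi₂
        · exact absurd rfl hne
    · rcases hFall f₂ hf₂ with rfl | rfl
      · rcases hFall f₁ hf₁ with rfl | rfl
        · exact absurd rfl hne
        · exact hi₁
      · exact hi₂
  apply he12
  apply hext
  intro x
  by_cases hxE : E x
  · constructor
    · intro hi; exact absurd hi (h.noEE e₁ x he₁ hxE)
    · intro hi; exact absurd hi (h.noEE e₂ x he₂ hxE)
  · rcases h.cover x with hx | hx | hx
    · exact ⟨fun _ => edgeAllV e₂ x he₂ hx, fun _ => edgeAllV e₁ x he₁ hx⟩
    · exact absurd hx hxE
    · exact ⟨fun _ => edgeAllF e₂ x he₂ hx, fun _ => edgeAllF e₁ x he₁ hx⟩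
end
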